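/- Let ρ be a two-qubit X-state: a 4×4 density matrix indexed by {0,1,2,3} (identifying (i,j) ∈ Fin 2 × Fin 2 with 2i+j) whose only possibly nonzero entries are the diagonal entries ρ₀₀, ρ₁₁, ρ₂₂, ρ₃₃ and the anti-diagonal entries ρ₀₃, ρ₃₀, ρ₁₂, ρ₂₁. Then the imaginarity steering functional equals I₂(ρ) = 2·|Re ρ₁₂ + Re ρ₀₃| + 2·|Re ρ₁₂ − Re ρ₀₃| (equivalently I₂(ρ) = |t₁₁| + |t₂₂|, with n₁ = n₂ = 0). -/

import Mathlib

open Matrix Kronecker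
open scoped ComplexOrder

/-- Trace norm of a square complex matrix: `Tr[sqrt(Aᴴ A)]`. -/
noncomputable def traceNorm {n : Type*} [Fintype n] [DecidableEq n]
    (A : Matrix n n ℂ) : ℝ :=
  ((Matrix.posSemidef_conjTranspose_mul_self A).1.eigenvectorUnitary.1 *
    Matrix.diagonal ((fun x : ℝ => ((Real.sqrt x : ℝ) : ℂ)) ∘ (Matrix.posSemidef_conjTranspose_mul_self A).1.eigenvalues) *
    (star (Matrix.posSemidef_conjTranspose_mul_self A).1.eigenvectorUnitary : Matrix n n ℂ)).trace.re

/-- Robustness of imaginarity: `(1/2) ‖ρ - ρᵀ‖₁`. -/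
noncomputable def roi {n : Type*} [Fintype n] [DecidableEq n]
    (ρ : Matrix n n ℂ) : ℝ :=
  (1 / 2) * traceNorm (ρ - ρ.transpose)
def σx : Matrix (Fin 2) (Fin 2) ℂ := !![0, 1; 1, 0]
def σy : Matrix (Fin 2) (Fin 2) ℂ := !![0, -Complex.I; Complex.I, 0]
def σz : Matrix (Fin 2) (Fin 2) ℂ := !![1, 0; 0, -1]
/-- Hadamard matrix (x-basis change). -/
noncomputable def Hm : Matrix (Fin 2) (Fin 2) ℂ :=
  (Real.sqrt 2 : ℂ)⁻¹ • !![1, 1; 1, -1]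
/-- Eigenvector matrix of σy (y-basis change). -/
noncomputable def Vm : Matrix (Fin 2) (Fin 2) ℂ :=
  (Real.sqrt 2 : ℂ)⁻¹ • !![1, 1; Complex.I, -Complex.I]

/-- Robustness of imaginarity in the x-basis. -/
noncomputable def roiX (σ : Matrix (Fin 2) (Fin 2) ℂ) : ℝ := roi (Hm * σ * Hm)
/-- Robustness of imaginarity in the y-basis. -/
noncomputable def roiY (σ : Matrix (Fin 2) (Fin 2) ℂ) : ℝ := roi (Vmᴴ * σ * Vm)
noncomputable def n1 (ρ : Matrix (Fin 2 × Fin 2) (Fin 2 × Fin 2) ℂ) : ℝ :=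
  ((((1 : Matrix (Fin 2) (Fin 2) ℂ) ⊗ₖ σx) * ρ).trace).re
noncomputable def n2 (ρ : Matrix (Fin 2 × Fin 2) (Fin 2 × Fin 2) ℂ) : ℝ :=
  ((((1 : Matrix (Fin 2) (Fin 2) ℂ) ⊗ₖ σy) * ρ).trace).re
noncomputable def t11 (ρ : Matrix (Fin 2 × Fin 2) (Fin 2 × Fin 2) ℂ) : ℝ :=
  (((σx ⊗ₖ σx) * ρ).trace).re
noncomputable def t22 (ρ : Matrix (Fin 2 × Fin 2) (Fin 2 × Fin 2) ℂ) : ℝ :=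
  (((σy ⊗ₖ σy) * ρ).trace).re

/-- The imaginarity steering functional. -/
noncomputable def I2 (ρ : Matrix (Fin 2 × Fin 2) (Fin 2 × Fin 2) ℂ) : ℝ :=
  (1 / 2) * (|n1 ρ - t11 ρ| + |n1 ρ + t11 ρ| + |n2 ρ - t22 ρ| + |n2 ρ + t22 ρ|)

/-- for a two-qubit X-state (only diagonal and anti-diagonal
entries possibly nonzero), `I₂(ρ) = 2·|Re ρ₁₂ + Re ρ₀₃| + 2·|Re ρ₁₂ − Re ρ₀₃|`,
with `n₁ = n₂ = 0`. Here indices `0,1,2,3` correspond to `(0,0),(0,1),(1,0),(1,1)`. -/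
theorem stmt17 (ρ : Matrix (Fin 2 × Fin 2) (Fin 2 × Fin 2) ℂ)
    (hρ : ρ.PosSemidef) (hTr : ρ.trace = 1)
    (hX : ∀ p q : Fin 2 × Fin 2, p ≠ q →
      ¬((p = ((0 : Fin 2), (0 : Fin 2)) ∧ q = ((1 : Fin 2), (1 : Fin 2)))
        ∨ (p = ((1 : Fin 2), (1 : Fin 2)) ∧ q = ((0 : Fin 2), (0 : Fin 2)))
        ∨ (p = ((0 : Fin 2), (1 : Fin 2)) ∧ q = ((1 : Fin 2), (0 : Fin 2)))
        ∨ (p = ((1 : Fin 2), (0 : Fin 2)) ∧ q = ((0 : Fin 2), (1 : Fin 2)))) →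
      ρ p q = 0) :
    I2 ρ = 2 * |(ρ ((0 : Fin 2), (1 : Fin 2)) ((1 : Fin 2), (0 : Fin 2))).re
        + (ρ ((0 : Fin 2), (0 : Fin 2)) ((1 : Fin 2), (1 : Fin 2))).re|
      + 2 * |(ρ ((0 : Fin 2), (1 : Fin 2)) ((1 : Fin 2), (0 : Fin 2))).re
        - (ρ ((0 : Fin 2), (0 : Fin 2)) ((1 : Fin 2), (1 : Fin 2))).re|
    ∧ n1 ρ = 0 ∧ n2 ρ = 0 := by
  have hH := hρ.1
  have hst : ∀ p q, ρ q p = star (ρ p q) := fun p q => (Matrix.IsHermitian.apply hH q p).symm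
  have h01 : ρ (0,0) ((0:Fin 2),(1:Fin 2)) = 0 := hX _ _ (by decide) (by decide)
  have h10 : ρ ((0:Fin 2),(1:Fin 2)) (0,0) = 0 := hX _ _ (by decide) (by decide)
  have h02 : ρ (0,0) ((1:Fin 2),(0:Fin 2)) = 0 := hX _ _ (by decide) (by decide)
  have h20 : ρ ((1:Fin 2),(0:Fin 2)) (0,0) = 0 := hX _ _ (by decide) (by decide)
  have h13 : ρ ((0:Fin 2),(1:Fin 2)) (1,1) = 0 := hX _ _ (by decide) (by decide)
  have h31 : ρ (1,1) ((0:Fin 2),(1:Fin 2)) = 0 := hX _ _ (by decide) (by decide)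
  have h23 : ρ ((1:Fin 2),(0:Fin 2)) (1,1) = 0 := hX _ _ (by decide) (by decide)
  have h32 : ρ (1,1) ((1:Fin 2),(0:Fin 2)) = 0 := hX _ _ (by decide) (by decide)
  have h30 : ρ ((1,1) : Fin 2 × Fin 2) (0,0) = star (ρ (0,0) (1,1)) := hst _ _
  have h21 : ρ ((1:Fin 2),(0:Fin 2)) ((0:Fin 2),(1:Fin 2))
      = star (ρ ((0:Fin 2),(1:Fin 2)) ((1:Fin 2),(0:Fin 2))) := hst _ _
  simp only [Prod.mk_zero_zero, Prod.mk_one_one] at h01 h10 h02 h20 h13 h31 h23 h32 h30 h21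
  have hn1 : n1 ρ = 0 := by
    simp [n1, Matrix.trace, Matrix.mul_apply, Fintype.sum_prod_type, Fin.sum_univ_two,
      Matrix.kroneckerMap_apply, σx, Matrix.one_apply, Prod.mk_zero_zero, Prod.mk_one_one,
      h01, h10, h13, h31, h02, h20, h23, h32]
  have hn2 : n2 ρ = 0 := by
    simp [n2, Matrix.trace, Matrix.mul_apply, Fintype.sum_prod_type, Fin.sum_univ_two,
      Matrix.kroneckerMap_apply, σy, Matrix.one_apply, Prod.mk_zero_zero, Prod.mk_one_one,
      h01, h10, h13, h31, h02, h20, h23, h32]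
  have ht11 : t11 ρ = 2 * ((ρ ((0:Fin 2),(1:Fin 2)) ((1:Fin 2),(0:Fin 2))).re
      + (ρ ((0:Fin 2),(0:Fin 2)) ((1:Fin 2),(1:Fin 2))).re) := by
    simp only [Prod.mk_zero_zero, Prod.mk_one_one]
    simp [t11, Matrix.trace, Matrix.mul_apply, Fintype.sum_prod_type, Fin.sum_univ_two,
      Matrix.kroneckerMap_apply, σx, Prod.mk_zero_zero, Prod.mk_one_one, h30, h21,
      RCLike.star_def, Complex.conj_re, Complex.conj_im]
    ring
  have ht22 : t22 ρ = 2 * ((ρ ((0:Fin 2),(1:Fin 2)) ((1:Fin 2),(0:Fin 2))).re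
      - (ρ ((0:Fin 2),(0:Fin 2)) ((1:Fin 2),(1:Fin 2))).re) := by
    simp only [Prod.mk_zero_zero, Prod.mk_one_one]
    simp [t22, Matrix.trace, Matrix.mul_apply, Fintype.sum_prod_type, Fin.sum_univ_two,
      Matrix.kroneckerMap_apply, σy, Prod.mk_zero_zero, Prod.mk_one_one, h30, h21,
      RCLike.star_def, Complex.conj_re, Complex.conj_im, Complex.mul_re, Complex.mul_im]
    ring
  refine ⟨?_, hn1, hn2⟩
  rw [I2, hn1, hn2, ht11, ht22]
  set a := (ρ ((0:Fin 2),(1:Fin 2)) ((1:Fin 2),(0:Fin 2))).re with ha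
  set b := (ρ ((0:Fin 2),(0:Fin 2)) ((1:Fin 2),(1:Fin 2))).re with hb
  rw [show (0:ℝ) - 2*(a+b) = -(2*(a+b)) by ring, abs_neg,
      show (0:ℝ) - 2*(a-b) = -(2*(a-b)) by ring, abs_neg,
      show (0:ℝ) + 2*(a+b) = 2*(a+b) by ring, show (0:ℝ) + 2*(a-b) = 2*(a-b) by ring,
      abs_mul, abs_mul]
  rw [abs_of_nonneg (by norm_num : (0:ℝ) ≤ 2)]
  ring
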